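/- arXiv:2402.06072 — 2 statements merged into one kernel-verified Lean document; each statement's English description precedes it below -/
import Mathlib

section
/- Let χ_1,…,χ_n : μ_d → ℂ* be multiplicative characters such that none of χ_1,…,χ_n and the product χ_1⋯χ_n is trivial. Then j(χ_1,…,χ_n)·j(χ̄_1,…,χ̄_n) = q^{n−1}, where χ̄_i denotes the inverse character of χ_i. -/
set_option linter.unusedSectionVars false
set_option maxHeartbeats 1000000


open scoped BigOperators

noncomputable section

namespace MotivicGJ

variable {κ : Type} [Field κ] [Fintype κ] [DecidableEq κ]

/-- The map `κˣ → μ_d`, `m ↦ m ^ ((q - 1) / d)`, where `q = |κ|`. -/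
def toMu (d : ℕ) (hd : d ∣ Fintype.card κ - 1) (m : κˣ) : rootsOfUnity d κ :=
  ⟨m ^ ((Fintype.card κ - 1) / d), by
    rw [mem_rootsOfUnity, ← pow_mul, Nat.div_mul_cancel hd, ← Fintype.card_units]
    exact pow_card_eq_one⟩

/-- The Gauss sum `g(ψ, χ) = -∑_{m ∈ κˣ} ψ(m) χ(m^((q-1)/d))`. -/
def gSum (d : ℕ) (hd : d ∣ Fintype.card κ - 1) (ψ : AddChar κ ℂ)
    (χ : rootsOfUnity d κ →* ℂˣ) : ℂ :=
  - ∑ m : κˣ, ψ (m : κ) * (χ (toMu d hd m) : ℂ)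

/-- The Jacobi sum `j(χ₁, …, χₙ)`. -/
def jSum (d : ℕ) (hd : d ∣ Fintype.card κ - 1) {n : ℕ}
    (χ : Fin n → (rootsOfUnity d κ →* ℂˣ)) : ℂ :=
  (-1 : ℂ) ^ (n - 1) *
    ∑ m ∈ Finset.univ.filter (fun m : Fin n → κˣ => (∑ i, (m i : κ)) = 1),
      ∏ i, (χ i (toMu d hd (m i)) : ℂ)

/-- The conjugate (inverse) additive character `ψ̄(a) = ψ(-a)`. -/
def conjAddChar (ψ : AddChar κ ℂ) : AddChar κ ℂ where
  toFun a := ψ (-a)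
  map_zero_eq_one' := by show ψ (-0) = 1; rw [neg_zero]; exact ψ.map_zero_eq_one
  map_add_eq_mul' a b := by show ψ (-(a + b)) = ψ (-a) * ψ (-b); rw [neg_add]; exact ψ.map_add_eq_mul _ _

/-! ### Auxiliary material -/

lemma addChar_map_sum {ι : Type} (ψ : AddChar κ ℂ) (s : Finset ι) (f : ι → κ) :
    ψ (∑ i ∈ s, f i) = ∏ i ∈ s, ψ (f i) := by
  classical
  induction s using Finset.cons_induction with
  | empty => simp
  | cons a s ha ih => rw [Finset.sum_cons, Finset.prod_cons, AddChar.map_add_eq_mul, ih]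

/-- `toMu` as a monoid hom. -/
def toMuHom (d : ℕ) (hd : d ∣ Fintype.card κ - 1) : κˣ →* rootsOfUnity d κ where
  toFun := toMu d hd
  map_one' := Subtype.ext (one_pow _)
  map_mul' a b := Subtype.ext (mul_pow a b _)

lemma toMu_surjective (d : ℕ) (hd0 : 0 < d) (hd : d ∣ Fintype.card κ - 1) :
    Function.Surjective (toMu (κ := κ) d hd) := by
  intro x
  obtain ⟨g, hg⟩ := IsCyclic.exists_generator (α := κˣ)
  have hor : orderOf g = Fintype.card κ - 1 := by
    rw [orderOf_eq_card_of_forall_mem_zpowers hg, Nat.card_eq_fintype_card, Fintype.card_units]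
  obtain ⟨k, hk⟩ : ∃ k : ℕ, g ^ k = (x : κˣ) := by
    have hx := hg (x : κˣ)
    rwa [← mem_powers_iff_mem_zpowers, Submonoid.mem_powers_iff] at hx
  have hxd : (x : κˣ) ^ d = 1 := by
    have h2 := x.2
    rwa [mem_rootsOfUnity] at h2
  have hde : d * ((Fintype.card κ - 1) / d) = Fintype.card κ - 1 := Nat.mul_div_cancel' hd
  have hdvd : (Fintype.card κ - 1) / d ∣ k := by
    have h1 : g ^ (d * k) = 1 := by rw [mul_comm, pow_mul, hk, hxd]
    have h2 : (Fintype.card κ - 1) ∣ d * k := hor ▸ orderOf_dvd_of_pow_eq_one h1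
    rw [← hde] at h2
    exact (Nat.mul_dvd_mul_iff_left hd0).mp h2
  obtain ⟨j, hj⟩ := hdvd
  refine ⟨g ^ j, Subtype.ext ?_⟩
  show (g ^ j) ^ ((Fintype.card κ - 1) / d) = (x : κˣ)
  rw [← pow_mul, mul_comm, ← hj, hk]

/-- The multiplicative character of `κ` associated to a character of `μ_d`. -/
def phi (d : ℕ) (hd : d ∣ Fintype.card κ - 1) (χ : rootsOfUnity d κ →* ℂˣ) : MulChar κ ℂ :=
  MulChar.ofUnitHom (χ.comp (toMuHom d hd))

lemma phi_coe (d : ℕ) (hd : d ∣ Fintype.card κ - 1) (χ : rootsOfUnity d κ →* ℂˣ) (u : κˣ) :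
    phi d hd χ ↑u = ((χ (toMu d hd u) : ℂˣ) : ℂ) :=
  MulChar.ofUnitHom_coe _ u

lemma phi_inv (d : ℕ) (hd : d ∣ Fintype.card κ - 1) (χ : rootsOfUnity d κ →* ℂˣ) :
    phi d hd χ⁻¹ = (phi d hd χ)⁻¹ := by
  ext u
  rw [MulChar.inv_apply_eq_inv', phi_coe, phi_coe]
  have : χ⁻¹ (toMu d hd u) = (χ (toMu d hd u))⁻¹ := rfl
  rw [this]
  exact Units.val_inv_eq_inv_val _

lemma prod_apply_units {ι : Type} (s : Finset ι) (Φ : ι → MulChar κ ℂ) (u : κˣ) :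
    (∏ i ∈ s, Φ i) ↑u = ∏ i ∈ s, Φ i ↑u := by
  classical
  induction s using Finset.cons_induction with
  | empty => simp [MulChar.one_apply_coe]
  | cons a s ha ih => rw [Finset.prod_cons, Finset.prod_cons, MulChar.mul_apply, ih]

/-- The sum of `∏ Φ i (t i)` over tuples with fixed coordinate sum. -/
def Zsum {n : ℕ} (Φ : Fin n → MulChar κ ℂ) (s : κ) : ℂ :=
  ∑ t ∈ Finset.univ.filter (fun t : Fin n → κ => (∑ i, t i) = s), ∏ i, Φ i (t i)

lemma Zsum_scale {n : ℕ} (Φ : Fin n → MulChar κ ℂ) (c : κˣ) (s : κ) :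
    Zsum Φ ((c : κ) * s) = (∏ i, Φ i (c : κ)) * Zsum Φ s := by
  rw [Zsum, Zsum, Finset.mul_sum]
  refine Finset.sum_nbij' (i := fun t => fun j => ((c⁻¹ : κˣ) : κ) * t j)
    (j := fun t => fun j => (c : κ) * t j) ?_ ?_ ?_ ?_ ?_
  · intro t ht
    simp only [Finset.mem_filter, Finset.mem_univ, true_and] at ht ⊢
    rw [← Finset.mul_sum, ht, Units.inv_mul_cancel_left]
  · intro t ht
    simp only [Finset.mem_filter, Finset.mem_univ, true_and] at ht ⊢
    rw [← Finset.mul_sum, ht]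
  · intro t _; funext j; exact Units.mul_inv_cancel_left c (t j)
  · intro t _; funext j; exact Units.inv_mul_cancel_left c (t j)
  · intro t _
    rw [← Finset.prod_mul_distrib]
    refine Finset.prod_congr rfl fun i _ => ?_
    rw [← map_mul, Units.mul_inv_cancel_left]

lemma Zsum_zero {n : ℕ} (Φ : Fin n → MulChar κ ℂ) (c : κˣ)
    (hc : (∏ i, Φ i (c : κ)) ≠ 1) : Zsum Φ 0 = 0 := by
  have h := Zsum_scale Φ c 0
  rw [mul_zero] at h
  by_contra h0
  exact hc (mul_right_cancel₀ h0 (by rw [one_mul]; exact h.symm))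

/-- The key identity: the product of Gauss sums equals `Z(1)` times the Gauss sum of the
product character. -/
lemma prod_gaussSum {n : ℕ} (Φ : Fin n → MulChar κ ℂ) (ψ : AddChar κ ℂ)
    (c : κˣ) (hc : (∏ i, Φ i (c : κ)) ≠ 1) :
    ∏ i, gaussSum (Φ i) ψ = Zsum Φ 1 * gaussSum (∏ i, Φ i) ψ := by
  have h1 : ∏ i, gaussSum (Φ i) ψ
      = ∑ t : Fin n → κ, ∏ i, (Φ i (t i) * ψ (t i)) := by
    simp only [gaussSum]
    rw [← Fintype.piFinset_univ]
    exact Finset.prod_univ_sum (fun _ : Fin n => (Finset.univ : Finset κ))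
      (fun i a => Φ i a * ψ a)
  have h2 : ∀ t : Fin n → κ, ∏ i, (Φ i (t i) * ψ (t i))
      = (∏ i, Φ i (t i)) * ψ (∑ i, t i) := by
    intro t
    rw [Finset.prod_mul_distrib, addChar_map_sum]
  have h3 : ∑ t : Fin n → κ, (∏ i, Φ i (t i)) * ψ (∑ i, t i)
      = ∑ s : κ, ∑ t ∈ Finset.univ.filter (fun t : Fin n → κ => (∑ i, t i) = s),
          (∏ i, Φ i (t i)) * ψ (∑ i, t i) :=
    by rw [Finset.sum_fiberwise Finset.univ (fun t : Fin n → κ => ∑ i, t i)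
      (fun t => (∏ i, Φ i (t i)) * ψ (∑ i, t i))]
  have h4 : ∀ s : κ, ∑ t ∈ Finset.univ.filter (fun t : Fin n → κ => (∑ i, t i) = s),
      (∏ i, Φ i (t i)) * ψ (∑ i, t i) = Zsum Φ s * ψ s := by
    intro s
    rw [Zsum, Finset.sum_mul]
    refine Finset.sum_congr rfl fun t ht => ?_
    rw [(Finset.mem_filter.mp ht).2]
  have h5 : ∀ s : κ, Zsum Φ s * ψ s = (∏ i, Φ i) s * Zsum Φ 1 * ψ s := by
    intro s
    rcases eq_or_ne s 0 with rfl | hs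
    · rw [Zsum_zero Φ c hc, MulChar.map_zero, zero_mul, zero_mul, zero_mul]
    · have hPs : (∏ i, Φ i) s = ∏ i, Φ i s := by
        simpa using prod_apply_units (Finset.univ) Φ (Units.mk0 s hs)
      have hZ := Zsum_scale Φ (Units.mk0 s hs) 1
      rw [mul_one] at hZ
      simp only [Units.val_mk0] at hZ
      rw [hZ, hPs]
  calc ∏ i, gaussSum (Φ i) ψ
      = ∑ t : Fin n → κ, (∏ i, Φ i (t i)) * ψ (∑ i, t i) := by
        rw [h1]; exact Finset.sum_congr rfl fun t _ => h2 t
    _ = ∑ s : κ, Zsum Φ s * ψ s := by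
        rw [h3]; exact Finset.sum_congr rfl fun s _ => h4 s
    _ = ∑ s : κ, (∏ i, Φ i) s * Zsum Φ 1 * ψ s :=
        Finset.sum_congr rfl fun s _ => h5 s
    _ = Zsum Φ 1 * gaussSum (∏ i, Φ i) ψ := by
        rw [gaussSum, Finset.mul_sum]
        exact Finset.sum_congr rfl fun s _ => by ring

lemma Zsum_eq_unitSum (d : ℕ) (hd : d ∣ Fintype.card κ - 1) {n : ℕ}
    (χ : Fin n → (rootsOfUnity d κ →* ℂˣ)) :
    Zsum (fun i => phi d hd (χ i)) 1
      = ∑ m ∈ Finset.univ.filter (fun m : Fin n → κˣ => (∑ i, (m i : κ)) = 1),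
          ∏ i, (χ i (toMu d hd (m i)) : ℂ) := by
  have hA : ∑ t ∈ Finset.univ.filter (fun t : Fin n → κ => (∑ i, t i) = 1),
        ∏ i, phi d hd (χ i) (t i)
      = ∑ t ∈ (Finset.univ.filter (fun t : Fin n → κ => (∑ i, t i) = 1)).filter
            (fun t => ∀ i, t i ≠ 0),
        ∏ i, phi d hd (χ i) (t i) := by
    refine (Finset.sum_filter_of_ne ?_).symm
    intro t _ hne i hti
    exact hne (Finset.prod_eq_zero (Finset.mem_univ i)
      (by rw [hti]; exact MulChar.map_zero _))
  rw [Zsum, hA]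
  refine Finset.sum_bij' (i := fun t ht j => Units.mk0 (t j) ((Finset.mem_filter.mp ht).2 j))
    (j := fun m _ => fun j => ((m j : κˣ) : κ)) ?_ ?_ ?_ ?_ ?_
  · intro t ht
    simp only [Finset.mem_filter, Finset.mem_univ, true_and, Units.val_mk0]
    exact (Finset.mem_filter.mp ((Finset.mem_filter.mp ht).1)).2
  · intro m hm
    simp only [Finset.mem_filter, Finset.mem_univ, true_and] at hm ⊢
    exact ⟨hm, fun i => Units.ne_zero (m i)⟩
  · intro t _; funext j; exact Units.val_mk0 _
  · intro m _; funext j; exact Units.ext (Units.val_mk0 _)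
  · intro t ht
    refine Finset.prod_congr rfl fun i _ => ?_
    conv_lhs => rw [show t i = ((Units.mk0 (t i) ((Finset.mem_filter.mp ht).2 i) : κˣ) : κ)
      from (Units.val_mk0 _).symm]
    exact phi_coe d hd (χ i) _

lemma jSum_eq (d : ℕ) (hd : d ∣ Fintype.card κ - 1) {n : ℕ}
    (χ : Fin n → (rootsOfUnity d κ →* ℂˣ)) :
    jSum d hd χ = (-1 : ℂ) ^ (n - 1) * Zsum (fun i => phi d hd (χ i)) 1 := by
  rw [jSum, Zsum_eq_unitSum]

lemma exists_primitive_addChar : ∃ ψ : AddChar κ ℂ, ψ.IsPrimitive := by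
  let p := ringChar κ
  haveI hp : Fact p.Prime := ⟨CharP.char_is_prime κ _⟩
  haveI : NeZero p := ⟨hp.1.ne_zero⟩
  have hζ : IsPrimitiveRoot (Complex.exp (2 * Real.pi * Complex.I / p)) p :=
    Complex.isPrimitiveRoot_exp p hp.1.ne_zero
  let ψ₀ : AddChar (ZMod p) ℂ :=
    AddChar.zmodChar p ((IsPrimitiveRoot.iff_def _ p).mp hζ).1
  letI : Algebra (ZMod p) κ := ZMod.algebra _ _
  let ψ : AddChar κ ℂ := ψ₀.compAddMonoidHom (Algebra.trace (ZMod p) κ).toAddMonoidHom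
  have hψ : ψ ≠ 1 := by
    obtain ⟨a, ha⟩ := FiniteField.trace_to_zmod_nondegenerate κ (one_ne_zero (α := κ))
    rw [one_mul] at ha
    refine AddChar.ne_one_iff.2 ⟨a, fun hf => ha ?_⟩
    exact ((AddChar.zmodChar_primitive_of_primitive_root p hζ).zmod_char_eq_one_iff p
      (Algebra.trace (ZMod p) κ a)).mp hf
  exact ⟨ψ, AddChar.IsPrimitive.of_ne_one hψ⟩

/-- If none of `χ₁, …, χₙ` and `χ₁⋯χₙ` is trivial, then
`j(χ₁,…,χₙ) ⬝ j(χ̄₁,…,χ̄ₙ) = q^(n-1)`. -/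
theorem jSum_mul_jSum_inv (d : ℕ) (hd0 : 0 < d) (hd : d ∣ Fintype.card κ - 1)
    {n : ℕ} (χ : Fin n → (rootsOfUnity d κ →* ℂˣ))
    (h1 : ∀ i, χ i ≠ 1) (hprod : (∏ i, χ i) ≠ 1) :
    jSum d hd χ * jSum d hd (fun i => (χ i)⁻¹) = (Fintype.card κ : ℂ) ^ (n - 1) := by
  classical
  have hn : n ≠ 0 := by
    rintro rfl
    exact hprod (by simp)
  obtain ⟨ψ, hψ⟩ := exists_primitive_addChar (κ := κ)
  set Φ : Fin n → MulChar κ ℂ := fun i => phi d hd (χ i) with hΦdef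
  set P : MulChar κ ℂ := ∏ i, Φ i with hPdef
  have hq0 : (Fintype.card κ : ℂ) ≠ 0 := by
    exact_mod_cast Fintype.card_ne_zero
  -- nontriviality of each Φ i
  have hΦne : ∀ i, Φ i ≠ 1 := by
    intro i hcontra
    apply h1 i
    refine MonoidHom.ext fun x => ?_
    obtain ⟨u, rfl⟩ := toMu_surjective d hd0 hd x
    have h := congrArg (fun f : MulChar κ ℂ => f ↑u) hcontra
    simp only [hΦdef] at h
    rw [phi_coe, MulChar.one_apply_coe] at h
    rw [MonoidHom.one_apply]
    exact Units.val_eq_one.mp h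
  -- a unit where the product character is ≠ 1
  obtain ⟨x, hx⟩ : ∃ x, (∏ i, χ i) x ≠ 1 := by
    by_contra hcon
    push_neg at hcon
    exact hprod (MonoidHom.ext fun y => (hcon y).trans (MonoidHom.one_apply y).symm)
  obtain ⟨u, hu⟩ := toMu_surjective d hd0 hd x
  have hΦu : ∀ v : κˣ, ∀ i, Φ i (v : κ) = ((χ i (toMu d hd v) : ℂˣ) : ℂ) := by
    intro v i; exact phi_coe d hd (χ i) v
  have hprodΦu : ∀ v : κˣ, (∏ i, Φ i (v : κ)) = (((∏ i, χ i) (toMu d hd v) : ℂˣ) : ℂ) := by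
    intro v
    rw [MonoidHom.finset_prod_apply, Units.coe_prod]
    exact Finset.prod_congr rfl fun i _ => hΦu v i
  have hc : (∏ i, Φ i ((u : κˣ) : κ)) ≠ 1 := by
    rw [hprodΦu u, hu]
    intro hcontra
    exact hx (Units.val_eq_one.mp hcontra)
  have hcinv : (∏ i, (Φ i)⁻¹ ((u : κˣ) : κ)) ≠ 1 := by
    have : (∏ i, (Φ i)⁻¹ ((u : κˣ) : κ)) = (∏ i, Φ i ((u : κˣ) : κ))⁻¹ := by
      rw [← Finset.prod_inv_distrib]
      exact Finset.prod_congr rfl fun i _ => MulChar.inv_apply_eq_inv' _ _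
    rw [this, ne_eq, inv_eq_one]
    exact hc
  have hPne : P ≠ 1 := by
    intro hcontra
    apply hc
    rw [← prod_apply_units Finset.univ Φ u, ← hPdef, hcontra, MulChar.one_apply_coe]
  have hPinvne : P⁻¹ ≠ 1 := by
    rw [ne_eq, inv_eq_one]; exact hPne
  -- pairing of Gauss sums
  have pair : ∀ ξ : MulChar κ ℂ, ξ ≠ 1 →
      gaussSum ξ ψ * gaussSum ξ⁻¹ ψ = ξ⁻¹ (-1) * (Fintype.card κ : ℂ) := by
    intro ξ hξ
    have hg1 := gaussSum_mul_gaussSum_eq_card hξ hψ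
    have hg2 := mul_gaussSum_inv_eq_gaussSum ξ⁻¹ ψ
    calc gaussSum ξ ψ * gaussSum ξ⁻¹ ψ
        = gaussSum ξ ψ * (ξ⁻¹ (-1) * gaussSum ξ⁻¹ ψ⁻¹) := by rw [hg2]
      _ = ξ⁻¹ (-1) * (gaussSum ξ ψ * gaussSum ξ⁻¹ ψ⁻¹) := by ring
      _ = ξ⁻¹ (-1) * (Fintype.card κ : ℂ) := by rw [hg1]
  -- the two main identities
  have main1 := prod_gaussSum Φ ψ u hc
  have main2 := prod_gaussSum (fun i => (Φ i)⁻¹) ψ u hcinv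
  have hprodinv : (∏ i, (Φ i)⁻¹) = P⁻¹ := by
    rw [Finset.prod_inv_distrib]
  rw [hprodinv] at main2
  -- product of all paired Gauss sums
  have lhs_eq : (∏ i, gaussSum (Φ i) ψ) * (∏ i, gaussSum (Φ i)⁻¹ ψ)
      = (∏ i, (Φ i)⁻¹ (-1)) * (Fintype.card κ : ℂ) ^ n := by
    rw [← Finset.prod_mul_distrib]
    have : ∀ i : Fin n, gaussSum (Φ i) ψ * gaussSum (Φ i)⁻¹ ψ
        = (Φ i)⁻¹ (-1) * (Fintype.card κ : ℂ) := fun i => pair (Φ i) (hΦne i)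
    rw [Finset.prod_congr rfl fun i _ => this i, Finset.prod_mul_distrib,
      Finset.prod_const, Finset.card_univ, Fintype.card_fin]
  have hA : (∏ i, (Φ i)⁻¹ (-1)) = P⁻¹ (-1) := by
    have h := prod_apply_units Finset.univ (fun i => (Φ i)⁻¹) (-1 : κˣ)
    rw [Units.coe_neg_one] at h
    rw [← h, hprodinv]
  have hPPinv : gaussSum P ψ * gaussSum P⁻¹ ψ = P⁻¹ (-1) * (Fintype.card κ : ℂ) :=
    pair P hPne
  have hGne : gaussSum P ψ * gaussSum P⁻¹ ψ ≠ 0 :=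
    mul_ne_zero (gaussSum_ne_zero_of_nontrivial hq0 hPne hψ)
      (gaussSum_ne_zero_of_nontrivial hq0 hPinvne hψ)
  have hAq : P⁻¹ (-1) * (Fintype.card κ : ℂ) ≠ 0 := hPPinv ▸ hGne
  -- express the Jacobi sums
  have hj1 : jSum d hd χ = (-1 : ℂ) ^ (n - 1) * Zsum Φ 1 := jSum_eq d hd χ
  have hj2 : jSum d hd (fun i => (χ i)⁻¹) = (-1 : ℂ) ^ (n - 1) * Zsum (fun i => (Φ i)⁻¹) 1 := by
    have := jSum_eq d hd (fun i => (χ i)⁻¹)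
    have heq : (fun i => phi d hd ((χ i)⁻¹)) = fun i => (Φ i)⁻¹ :=
      funext fun i => phi_inv d hd (χ i)
    rwa [heq] at this
  have hsign : jSum d hd χ * jSum d hd (fun i => (χ i)⁻¹)
      = Zsum Φ 1 * Zsum (fun i => (Φ i)⁻¹) 1 := by
    rw [hj1, hj2]
    have : ((-1 : ℂ) ^ (n - 1)) * ((-1 : ℂ) ^ (n - 1)) = 1 := by
      rw [← pow_add, ← two_mul, pow_mul]
      norm_num
    calc ((-1 : ℂ) ^ (n - 1) * Zsum Φ 1) * ((-1 : ℂ) ^ (n - 1) * Zsum (fun i => (Φ i)⁻¹) 1)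
        = (((-1 : ℂ) ^ (n - 1)) * ((-1 : ℂ) ^ (n - 1))) *
            (Zsum Φ 1 * Zsum (fun i => (Φ i)⁻¹) 1) := by ring
      _ = Zsum Φ 1 * Zsum (fun i => (Φ i)⁻¹) 1 := by rw [this, one_mul]
  -- the cancellation
  have key : (Zsum Φ 1 * Zsum (fun i => (Φ i)⁻¹) 1) * (P⁻¹ (-1) * (Fintype.card κ : ℂ))
      = (Fintype.card κ : ℂ) ^ (n - 1) * (P⁻¹ (-1) * (Fintype.card κ : ℂ)) := by
    have hqn : (Fintype.card κ : ℂ) ^ n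
        = (Fintype.card κ : ℂ) ^ (n - 1) * (Fintype.card κ : ℂ) := by
      conv_lhs => rw [show n = (n - 1) + 1 from (Nat.succ_pred_eq_of_pos (Nat.pos_of_ne_zero hn)).symm]
      rw [pow_succ]
    calc (Zsum Φ 1 * Zsum (fun i => (Φ i)⁻¹) 1) * (P⁻¹ (-1) * (Fintype.card κ : ℂ))
        = (Zsum Φ 1 * gaussSum P ψ) * (Zsum (fun i => (Φ i)⁻¹) 1 * gaussSum P⁻¹ ψ) := by
          rw [← hPPinv]; ring
      _ = (∏ i, gaussSum (Φ i) ψ) * (∏ i, gaussSum (Φ i)⁻¹ ψ) := by rw [main1, main2]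
      _ = (∏ i, (Φ i)⁻¹ (-1)) * (Fintype.card κ : ℂ) ^ n := lhs_eq
      _ = P⁻¹ (-1) * ((Fintype.card κ : ℂ) ^ (n - 1) * (Fintype.card κ : ℂ)) := by
          rw [hA, hqn]
      _ = (Fintype.card κ : ℂ) ^ (n - 1) * (P⁻¹ (-1) * (Fintype.card κ : ℂ)) := by ring
  rw [hsign]
  exact mul_right_cancel₀ hAq key

end MotivicGJ
end
end

section
/- Let ψ : κ → ℂ* be a nontrivial additive character and χ : μ_d → ℂ* a nontrivial multiplicative character. Then g(ψ,χ) is an algebraic number, and every complex root of its minimal polynomial over ℚ has absolute value q^{1/2} (i.e., g(ψ,χ) is a q-Weil number of weight one). -/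
open scoped BigOperators

noncomputable section

namespace MotivicGJ

variable {κ : Type} [Field κ] [Fintype κ] [DecidableEq κ]

/-! ### Auxiliary lemmas -/

lemma isIntegral_of_pow_eq_one {x : ℂ} {n : ℕ} (hn : 0 < n) (h : x ^ n = 1) :
    IsIntegral ℚ x := by
  refine ⟨Polynomial.X ^ n - Polynomial.C 1, Polynomial.monic_X_pow_sub_C 1 hn.ne', ?_⟩
  simp [h]

lemma psi_pow_card (ψ : AddChar κ ℂ) (a : κ) : ψ a ^ Fintype.card κ = 1 := by
  rw [← AddChar.map_nsmul_eq_pow, card_nsmul_eq_zero, AddChar.map_zero_eq_one]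

lemma chi_val_pow {d : ℕ} (χ : rootsOfUnity d κ →* ℂˣ) (u : rootsOfUnity d κ) :
    ((χ u : ℂˣ) : ℂ) ^ d = 1 := by
  have hu : (u : κˣ) ^ d = 1 := (mem_rootsOfUnity d (u : κˣ)).mp u.2
  have h1 : u ^ d = 1 := Subtype.ext (by rw [SubmonoidClass.coe_pow]; exact hu)
  have : (χ u) ^ d = 1 := by rw [← map_pow, h1, map_one]
  calc ((χ u : ℂˣ) : ℂ) ^ d = (((χ u) ^ d : ℂˣ) : ℂ) := by rw [Units.val_pow_eq_pow_val]
    _ = 1 := by rw [this, Units.val_one]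

lemma abs_gSum (d : ℕ) (hd0 : 0 < d) (hd : d ∣ Fintype.card κ - 1)
    (ψ : AddChar κ ℂ) (hψ : ψ ≠ 1) (χ : rootsOfUnity d κ →* ℂˣ) (hχ : χ ≠ 1) :
    ‖gSum d hd ψ χ‖ = Real.sqrt (Fintype.card κ) := by
  set χ' : MulChar κ ℂ := MulChar.ofUnitHom (χ.comp (toMuHom d hd)) with hχ'def
  have hval : ∀ m : κˣ, χ' (m : κ) = ((χ (toMu d hd m) : ℂˣ) : ℂ) := fun m => by
    rw [hχ'def, MulChar.ofUnitHom_coe]; rfl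
  have hχ' : χ' ≠ 1 := by
    intro h
    apply hχ
    refine MonoidHom.ext fun u => ?_
    obtain ⟨m, rfl⟩ := toMu_surjective d hd0 hd u
    have h1 : χ' (m : κ) = 1 := by rw [h, MulChar.one_apply_coe]
    rw [hval] at h1
    exact Units.ext h1
  have hg : gSum d hd ψ χ = - gaussSum χ' ψ := by
    rw [gSum, gaussSum]
    congr 1
    have himage : (Finset.univ : Finset κˣ).image (Units.val) =
        (Finset.univ : Finset κ).erase 0 := by
      ext a
      simp only [Finset.mem_image, Finset.mem_erase, Finset.mem_univ, and_true, true_and]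
      constructor
      · rintro ⟨m, rfl⟩; exact m.ne_zero
      · intro ha; exact ⟨Units.mk0 a ha, rfl⟩
    calc ∑ m : κˣ, ψ (m : κ) * ((χ (toMu d hd m) : ℂˣ) : ℂ)
        = ∑ m : κˣ, χ' (m : κ) * ψ (m : κ) := by
          refine Finset.sum_congr rfl fun m _ => ?_
          rw [hval, mul_comm]
      _ = ∑ a ∈ (Finset.univ : Finset κ).erase 0, χ' a * ψ a := by
          rw [← himage, Finset.sum_image (fun a _ b _ h => Units.ext h)]
      _ = ∑ a : κ, χ' a * ψ a := by
          rw [← Finset.sum_erase_add Finset.univ _ (Finset.mem_univ (0 : κ)),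
            MulChar.map_zero, zero_mul, add_zero]
  have hprim : ψ.IsPrimitive := AddChar.IsPrimitive.of_ne_one hψ
  have hcard := gaussSum_mul_gaussSum_eq_card hχ' hprim
  have hconj : (starRingEnd ℂ) (gaussSum χ' ψ) = gaussSum χ'⁻¹ ψ⁻¹ := by
    rw [gaussSum, gaussSum, map_sum]
    refine Finset.sum_congr rfl fun a _ => ?_
    rw [map_mul]
    congr 1
    · rw [← MulChar.star_eq_inv]
      rfl
    · rw [AddChar.inv_apply']
      exact (Complex.inv_eq_conj
        (Complex.norm_eq_one_of_pow_eq_one (psi_pow_card ψ a) Fintype.card_pos.ne')).symm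
  rw [← hconj, Complex.mul_conj] at hcard
  have hnsq : Complex.normSq (gaussSum χ' ψ) = (Fintype.card κ : ℝ) := by
    exact_mod_cast hcard
  rw [hg, norm_neg, Complex.norm_def, hnsq]

/-- For nontrivial `ψ` and `χ`, the Gauss sum `g(ψ,χ)` is an algebraic
number all of whose conjugates (complex roots of its minimal polynomial over `ℚ`) have
absolute value `q^(1/2)`, i.e. it is a `q`-Weil number of weight one. -/
theorem gSum_isWeilNumber (d : ℕ) (hd0 : 0 < d) (hd : d ∣ Fintype.card κ - 1)
    (ψ : AddChar κ ℂ) (hψ : ψ ≠ 1) (χ : rootsOfUnity d κ →* ℂˣ) (hχ : χ ≠ 1) :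
    IsAlgebraic ℚ (gSum d hd ψ χ) ∧
      ∀ z : ℂ, Polynomial.aeval z (minpoly ℚ (gSum d hd ψ χ)) = 0 →
        ‖z‖ = Real.sqrt (Fintype.card κ) := by
  classical
  set S : Set ℂ := (Set.range fun a : κ => ψ a) ∪
    (Set.range fun u : rootsOfUnity d κ => ((χ u : ℂˣ) : ℂ)) with hS
  set M : IntermediateField ℚ ℂ := IntermediateField.adjoin ℚ S with hMdef
  have hSint : ∀ x ∈ S, IsIntegral ℚ x := by
    rintro x (⟨a, rfl⟩ | ⟨u, rfl⟩)
    · exact isIntegral_of_pow_eq_one Fintype.card_pos (psi_pow_card ψ a)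
    · exact isIntegral_of_pow_eq_one hd0 (chi_val_pow χ u)
  have hMalg : Algebra.IsAlgebraic ℚ M := IntermediateField.isAlgebraic_adjoin hSint
  have memψ : ∀ a : κ, ψ a ∈ M := fun a =>
    IntermediateField.subset_adjoin ℚ S (Or.inl ⟨a, rfl⟩)
  have memχ : ∀ u : rootsOfUnity d κ, ((χ u : ℂˣ) : ℂ) ∈ M := fun u =>
    IntermediateField.subset_adjoin ℚ S (Or.inr ⟨u, rfl⟩)
  have hgmem : gSum d hd ψ χ ∈ M := by
    rw [gSum]
    exact neg_mem (sum_mem fun m _ => mul_mem (memψ m) (memχ _))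
  set gM : M := ⟨gSum d hd ψ χ, hgmem⟩ with hgMdef
  have hgint : IsIntegral ℚ gM := (hMalg.isAlgebraic gM).isIntegral
  have halg : IsAlgebraic ℚ (gSum d hd ψ χ) := by
    have := (hMalg.isAlgebraic gM).algHom M.val
    simpa using this
  refine ⟨halg, fun z hz => ?_⟩
  have hmin : minpoly ℚ (gSum d hd ψ χ) = minpoly ℚ gM := by
    have := minpoly.algebraMap_eq (A := ℚ) (B := M) (B' := ℂ) (algebraMap M ℂ).injective gM
    simpa using this
  have hzroot : z ∈ (minpoly ℚ gM).rootSet ℂ := by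
    rw [Polynomial.mem_rootSet]
    exact ⟨minpoly.ne_zero hgint, by rw [← hmin]; exact hz⟩
  rw [← hMalg.range_eval_eq_rootSet_minpoly ℂ gM] at hzroot
  obtain ⟨σ, hσ⟩ := hzroot
  -- transport the characters along σ
  let ψ' : AddChar κ ℂ :=
  { toFun := fun a => σ ⟨ψ a, memψ a⟩
    map_zero_eq_one' := by
      have h1 : (⟨ψ 0, memψ 0⟩ : M) = 1 := Subtype.ext (by simp)
      show σ ⟨ψ 0, memψ 0⟩ = 1
      rw [h1, map_one]
    map_add_eq_mul' := fun a b => by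
      have h1 : (⟨ψ (a + b), memψ (a + b)⟩ : M) = ⟨ψ a, memψ a⟩ * ⟨ψ b, memψ b⟩ :=
        Subtype.ext (by simp [AddChar.map_add_eq_mul])
      show σ ⟨ψ (a + b), memψ (a + b)⟩ = σ ⟨ψ a, memψ a⟩ * σ ⟨ψ b, memψ b⟩
      rw [h1, map_mul] }
  have hψ'app : ∀ a : κ, ψ' a = σ ⟨ψ a, memψ a⟩ := fun a => rfl
  have memχinv : ∀ u : rootsOfUnity d κ, (((χ u)⁻¹ : ℂˣ) : ℂ) ∈ M := fun u => by
    have : ((χ u⁻¹ : ℂˣ) : ℂ) ∈ M := memχ u⁻¹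
    rwa [map_inv] at this
  let χM : rootsOfUnity d κ →* Mˣ :=
  { toFun := fun u =>
      ⟨⟨((χ u : ℂˣ) : ℂ), memχ u⟩, ⟨(((χ u)⁻¹ : ℂˣ) : ℂ), memχinv u⟩,
        Subtype.ext (by simp), Subtype.ext (by simp)⟩
    map_one' := Units.ext (Subtype.ext (by simp))
    map_mul' := fun u v => Units.ext (Subtype.ext (by simp)) }
  let χ' : rootsOfUnity d κ →* ℂˣ := (Units.map (σ : M →+* ℂ).toMonoidHom).comp χM
  have hχ'app : ∀ u : rootsOfUnity d κ, ((χ' u : ℂˣ) : ℂ) = σ ⟨((χ u : ℂˣ) : ℂ), memχ u⟩ :=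
    fun u => rfl
  have hinj : Function.Injective σ := σ.toRingHom.injective
  have hψ' : ψ' ≠ 1 := by
    obtain ⟨a, ha⟩ := AddChar.ne_one_iff.mp hψ
    refine AddChar.ne_one_iff.mpr ⟨a, fun h => ha ?_⟩
    rw [hψ'app] at h
    have h2 : (⟨ψ a, memψ a⟩ : M) = 1 := hinj (by rw [map_one]; exact h)
    simpa using congrArg Subtype.val h2
  have hχ'' : χ' ≠ 1 := by
    intro h
    apply hχ
    refine MonoidHom.ext fun u => ?_
    have h1 : χ' u = 1 := by rw [h]; rfl
    have h2 : σ ⟨((χ u : ℂˣ) : ℂ), memχ u⟩ = 1 := by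
      rw [← hχ'app, h1, Units.val_one]
    have h3 : (⟨((χ u : ℂˣ) : ℂ), memχ u⟩ : M) = 1 := hinj (by rw [map_one]; exact h2)
    have h4 : ((χ u : ℂˣ) : ℂ) = 1 := by simpa using congrArg Subtype.val h3
    exact Units.ext h4
  have hσ' : σ gM = z := hσ
  have key : z = gSum d hd ψ' χ' := by
    rw [← hσ']
    have hgMeq : gM = - ∑ m : κˣ,
        (⟨ψ (m : κ), memψ (m : κ)⟩ : M) * ⟨((χ (toMu d hd m) : ℂˣ) : ℂ), memχ _⟩ := by
      apply Subtype.ext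
      show gSum d hd ψ χ = _
      rw [gSum]
      push_cast
      rfl
    rw [hgMeq, map_neg, map_sum, gSum]
    congr 1
    refine Finset.sum_congr rfl fun m _ => ?_
    rw [map_mul, hψ'app, hχ'app]
  rw [key]
  exact abs_gSum d hd0 hd ψ' hψ' χ' hχ''

end MotivicGJ
end
end
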